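/- Let u : ℝ → ℝ^k be a C² periodic function and f : ℝ × ℝ^k → ℝ^k continuous with f(t,x)•x > 0 whenever |x| ≥ M. If u satisfies ü(t) = λ f(t,u(t)) + (1-λ)u(t) for some λ ∈ [0,1], then max_t |u(t)| < M. -/

import Mathlib

open Real

theorem nagumo_apriori_bound
    (k : ℕ) (u : ℝ → EuclideanSpace ℝ (Fin k))
    (f : ℝ → EuclideanSpace ℝ (Fin k) → EuclideanSpace ℝ (Fin k))
    (T M lam : ℝ) (hT : 0 < T) (hM : 0 < M)
    (hu : ContDiff ℝ 2 u) (hper : Function.Periodic u T)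
    (hf : Continuous (fun p : ℝ × EuclideanSpace ℝ (Fin k) => f p.1 p.2))
    (hNagumo : ∀ t (x : EuclideanSpace ℝ (Fin k)), M ≤ ‖x‖ →
      (0:ℝ) < inner ℝ (f t x) x)
    (hlam : lam ∈ Set.Icc (0:ℝ) 1)
    (hode : ∀ t, deriv (deriv u) t = lam • f t (u t) + (1 - lam) • u t) :
    ∀ t, ‖u t‖ < M := by
  have hu1 : Differentiable ℝ u := hu.differentiable (by norm_num)
  have h2 : ContDiff ℝ 1 (deriv u) := by
    have h := (contDiff_succ_iff_deriv (n := 1)).mp (by exact_mod_cast hu)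
    exact h.2.2
  have hdu' : Differentiable ℝ (deriv u) := h2.differentiable one_ne_zero
  have hcu' : Continuous (deriv u) := h2.continuous
  -- φ(t) = ⟪u t, u t⟫, ψ(t) = ⟪u' t, u t⟫
  set φ : ℝ → ℝ := fun t => inner ℝ (u t) (u t) with hφdef
  set ψ : ℝ → ℝ := fun t => inner ℝ (deriv u t) (u t) with hψdef
  set g : ℝ → ℝ := fun t =>
    (inner ℝ (deriv u t) (deriv u t) : ℝ) +
      inner ℝ (lam • f t (u t) + (1 - lam) • u t) (u t) with hgdef
  have hφd : ∀ t, HasDerivAt φ (2 * ψ t) t := by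
    intro t
    have h := ((hu1 t).hasDerivAt).inner ℝ ((hu1 t).hasDerivAt)
    have heq : (inner ℝ (u t) (deriv u t) : ℝ) + inner ℝ (deriv u t) (u t) = 2 * ψ t := by
      simp only [hψdef]; rw [real_inner_comm (u t) (deriv u t)]; ring
    rw [heq] at h
    exact h
  have hψd : ∀ t, HasDerivAt ψ (g t) t := by
    intro t
    have h := ((hdu' t).hasDerivAt).inner ℝ ((hu1 t).hasDerivAt)
    have heq : (inner ℝ (deriv u t) (deriv u t) : ℝ) + inner ℝ (deriv (deriv u) t) (u t) = g t := by
      simp only [hgdef, hode t]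
    rw [heq] at h
    exact h
  have hgcont : Continuous g := by
    apply Continuous.add
    · exact hcu'.inner hcu'
    · exact Continuous.inner
        (((hf.comp (continuous_id.prodMk hu1.continuous)).const_smul lam).add
          (hu1.continuous.const_smul (1 - lam))) hu1.continuous
  have hφcont : Continuous φ := hu1.continuous.inner hu1.continuous
  have hφper : Function.Periodic φ T := fun t => by simp [φ, hper t]
  -- maximum point
  obtain ⟨t₀, ht₀mem, ht₀max⟩ := (isCompact_Icc (a := (0:ℝ)) (b := T)).exists_isMaxOn
    (Set.nonempty_Icc.2 hT.le) hφcont.continuousOn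
  have hmax : ∀ t, φ t ≤ φ t₀ := by
    intro t
    obtain ⟨y, hy, hyeq⟩ := hφper.exists_mem_Ico₀ hT t
    rw [hyeq]
    exact ht₀max (Set.mem_Icc.2 ⟨hy.1, hy.2.le⟩)
  have hφnorm : ∀ t, φ t = ‖u t‖ ^ 2 := fun t => real_inner_self_eq_norm_sq (u t)
  -- main claim: ‖u t₀‖ < M
  have key : ‖u t₀‖ < M := by
    by_contra hcon
    push_neg at hcon
    -- ψ t₀ = 0
    have hloc : IsLocalMax φ t₀ := Filter.Eventually.of_forall hmax
    have hderiv0 : deriv φ t₀ = 0 := hloc.deriv_eq_zero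
    have hψ0 : ψ t₀ = 0 := by
      have := (hφd t₀).deriv
      rw [hderiv0] at this; linarith
    -- g t₀ > 0
    have hgpos : 0 < g t₀ := by
      have h1 : (inner ℝ (lam • f t₀ (u t₀) + (1 - lam) • u t₀) (u t₀) : ℝ)
          = lam * inner ℝ (f t₀ (u t₀)) (u t₀) + (1 - lam) * inner ℝ (u t₀) (u t₀) := by
        rw [inner_add_left, real_inner_smul_left, real_inner_smul_left]
      have huu : (inner ℝ (u t₀) (u t₀) : ℝ) = ‖u t₀‖ ^ 2 := real_inner_self_eq_norm_sq _
      have huuM : (M:ℝ) ^ 2 ≤ inner ℝ (u t₀) (u t₀) := by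
        rw [huu]; exact pow_le_pow_left₀ hM.le hcon 2
      have hsum : 0 < lam * inner ℝ (f t₀ (u t₀)) (u t₀) + (1 - lam) * inner ℝ (u t₀) (u t₀) := by
        rcases eq_or_lt_of_le hlam.1 with h0 | h0
        · rw [← h0]
          nlinarith [lt_of_lt_of_le (pow_pos hM 2) huuM]
        · have hfpos := hNagumo t₀ (u t₀) hcon
          have h1' : 0 < lam * inner ℝ (f t₀ (u t₀)) (u t₀) := mul_pos h0 hfpos
          have h2' : 0 ≤ (1 - lam) * (inner ℝ (u t₀) (u t₀) : ℝ) :=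
            mul_nonneg (by linarith [hlam.2]) real_inner_self_nonneg
          linarith
      have hnn : (0:ℝ) ≤ inner ℝ (deriv u t₀) (deriv u t₀) := real_inner_self_nonneg
      rw [hgdef]; dsimp only
      rw [h1]; linarith
    -- g > 0 near t₀
    have hev : ∀ᶠ s in nhds t₀, 0 < g s := by
      have : Set.Ioi (0:ℝ) ∈ nhds (g t₀) := Ioi_mem_nhds hgpos
      exact hgcont.continuousAt.eventually_mem this
    obtain ⟨ε, hε, hball⟩ := Metric.eventually_nhds_iff.mp hev
    set δ := ε / 2 with hδdef
    have hδ : 0 < δ := by positivity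
    have hgIcc : ∀ s ∈ Set.Icc t₀ (t₀ + δ), 0 < g s := by
      intro s hs
      apply hball
      rw [Real.dist_eq, abs_lt]
      constructor <;> [linarith [hs.1]; linarith [hs.2]]
    -- ψ strictly monotone on [t₀, t₀+δ]
    have hψmono : StrictMonoOn ψ (Set.Icc t₀ (t₀ + δ)) := by
      apply strictMonoOn_of_deriv_pos (convex_Icc _ _)
      · exact fun s _ => ((hψd s).differentiableAt.continuousAt).continuousWithinAt
      · intro s hs
        rw [interior_Icc] at hs
        rw [(hψd s).deriv]
        exact hgIcc s ⟨hs.1.le, hs.2.le⟩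
    have hψpos : ∀ s ∈ Set.Ioo t₀ (t₀ + δ), 0 < ψ s := by
      intro s hs
      have := hψmono (Set.left_mem_Icc.2 (by linarith)) ⟨hs.1.le, hs.2.le⟩ hs.1
      rwa [hψ0] at this
    -- φ strictly monotone on [t₀, t₀+δ]
    have hφmono : StrictMonoOn φ (Set.Icc t₀ (t₀ + δ)) := by
      apply strictMonoOn_of_deriv_pos (convex_Icc _ _) hφcont.continuousOn
      intro s hs
      rw [interior_Icc] at hs
      rw [(hφd s).deriv]
      have := hψpos s hs
      linarith
    have : φ t₀ < φ (t₀ + δ) :=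
      hφmono (Set.left_mem_Icc.2 (by linarith)) (Set.right_mem_Icc.2 (by linarith)) (by linarith)
    exact absurd (hmax (t₀ + δ)) (not_le.2 this)
  intro t
  have h1 : ‖u t‖ ^ 2 ≤ ‖u t₀‖ ^ 2 := by
    rw [← hφnorm, ← hφnorm]; exact hmax t
  have h2 : ‖u t₀‖ ^ 2 < M ^ 2 := by
    apply pow_lt_pow_left₀ key (norm_nonneg _)
    norm_num
  nlinarith [norm_nonneg (u t)]
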